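/- Periodicity and explicit form of the dynamical sequences for λ = 1/(k+Φ) (Theorem 4.3). With the dynamical sequences (y_n), (p_n) defined as in the context and μ̄ = ν/Φ³: (1) if |μ| > μ̄, then p_{n+2} = p_n for all n ≥ 0; more precisely, for every even n ≥ 0, p_n = 1/(C·Φ) and ℓ(y_n) = C·λ·Φ^{n+1}, and for every odd n ≥ 1, p_n = 1 − 1/(D·Φ) and ℓ(y_n) = D·λ·Φ^{n+1}; (2) if |μ| ≤ μ̄, then p_{n+1} = p_n for all n ≥ 1; more precisely, if −μ̄ < μ < −ν then for every n ≥ 1, p_n = 1 − Φ/D and ℓ(y_n) = D·λ·Φ^{2n}, while if ν < μ < μ̄ then for every n ≥ 0, p_n = Φ/C and ℓ(y_n) = C·λ·Φ^{2n+1}. -/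

import Mathlib

open Real Set
open scoped Classical

noncomputable section

/-- The reciprocal golden ratio Φ = (√5 − 1)/2. -/
def Phi : ℝ := (Real.sqrt 5 - 1) / 2

/-- C = 2μ/(μ+ν). -/
def CC (mu nu : ℝ) : ℝ := 2 * mu / (mu + nu)

/-- D = 2μ/(μ−ν). -/
def DD (mu nu : ℝ) : ℝ := 2 * mu / (mu - nu)

/-- ℓ(y) = 2y/ν. -/
def ell (nu y : ℝ) : ℝ := 2 * y / nu

/-- One step of the recursion defining the dynamical sequences
(y_n, p_n, κ_n) ↦ (y_{n+1}, p_{n+1}, κ_{n+1}). -/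
def dynStep (lam nu mu : ℝ) : ℝ × ℝ × ℕ → ℝ × ℝ × ℕ := fun s =>
  let y := s.1
  let p := s.2.1
  let kap := s.2.2
  let C := CC mu nu
  let D := DD mu nu
  let y' : ℝ := if p < 1 / C then (1 - C * p) * y
    else if 1 / C < p then (1 - D * (1 - p)) * y else 0
  let kap' : ℕ := if p < 1 / C then sInf {m : ℕ | lam * Phi ^ (2 * m) < ell nu y'}
    else if 1 / C < p then sInf {m : ℕ | lam * Phi ^ (2 * m + 1) < ell nu y'}
    else kap
  let Ups : ℝ := if p ≤ 1 / C then lam * Phi ^ (2 * kap')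
    else if 1 < ell nu y' then 1
    else if lam * Phi < ell nu y' then
      1 - ((1 + ⌊(1 - ell nu y') / lam⌋ : ℤ) : ℝ) * lam
    else lam * Phi ^ (2 * kap' + 1)
  let p' : ℝ := if p < 1 / C then Ups / ell nu y'
    else if 1 / C < p then 1 - Ups / ell nu y' else 0
  (y', p', kap')

/-- The dynamical sequences (y_n, p_n, κ_n). -/
def dynSeq (lam eta nu mu : ℝ) : ℕ → ℝ × ℝ × ℕ
  | 0 =>
      (eta * mu * nu / (mu + nu),
        lam * Phi ^ (2 * sInf {m : ℕ | lam * Phi ^ (2 * m) < ell nu (eta * mu * nu / (mu + nu))})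
          / ell nu (eta * mu * nu / (mu + nu)),
        sInf {m : ℕ | lam * Phi ^ (2 * m) < ell nu (eta * mu * nu / (mu + nu))})
  | n + 1 => dynStep lam nu mu (dynSeq lam eta nu mu n)

/-- y_n. -/
def yseq (lam eta nu mu : ℝ) (n : ℕ) : ℝ := (dynSeq lam eta nu mu n).1

/-- p_n. -/
def pseq (lam eta nu mu : ℝ) (n : ℕ) : ℝ := (dynSeq lam eta nu mu n).2.1

set_option maxHeartbeats 1000000

lemma phi_sq : Phi ^ 2 = 1 - Phi := by
  have h5 : Real.sqrt 5 ^ 2 = 5 := Real.sq_sqrt (by norm_num)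
  unfold Phi; nlinarith [h5]

lemma phi_pos : 0 < Phi := by
  have h5 : Real.sqrt 5 ^ 2 = 5 := Real.sq_sqrt (by norm_num)
  have h5' := Real.sqrt_nonneg 5
  unfold Phi; nlinarith

lemma phi_lt : Phi < 1 := by
  have h5 : Real.sqrt 5 ^ 2 = 5 := Real.sq_sqrt (by norm_num)
  have h5' := Real.sqrt_nonneg 5
  unfold Phi; nlinarith

lemma phi_gt' : (0.6:ℝ) < Phi := by
  have h5 : Real.sqrt 5 ^ 2 = 5 := Real.sq_sqrt (by norm_num)
  have h5' := Real.sqrt_nonneg 5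
  unfold Phi; nlinarith

lemma phi_lt' : Phi < (0.62:ℝ) := by
  have h5 : Real.sqrt 5 ^ 2 = 5 := Real.sq_sqrt (by norm_num)
  have h5' := Real.sqrt_nonneg 5
  unfold Phi; nlinarith

lemma phi_cube : Phi ^ 3 = 2 * Phi - 1 := by nlinarith [phi_sq]

lemma dynStep_lt {lam nu mu y p : ℝ} {kap : ℕ} (h : p < 1 / CC mu nu) :
    dynStep lam nu mu (y, p, kap) =
      ((1 - CC mu nu * p) * y,
       lam * Phi ^ (2 * sInf {m : ℕ | lam * Phi ^ (2 * m) < ell nu ((1 - CC mu nu * p) * y)})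
         / ell nu ((1 - CC mu nu * p) * y),
       sInf {m : ℕ | lam * Phi ^ (2 * m) < ell nu ((1 - CC mu nu * p) * y)}) := by
  simp only [dynStep]
  simp only [if_pos h, if_pos h.le]

lemma dynStep_gt {lam nu mu y p : ℝ} {kap : ℕ} (h : 1 / CC mu nu < p) :
    dynStep lam nu mu (y, p, kap) =
      ((1 - DD mu nu * (1 - p)) * y,
       1 - (if 1 < ell nu ((1 - DD mu nu * (1 - p)) * y) then (1:ℝ)
         else if lam * Phi < ell nu ((1 - DD mu nu * (1 - p)) * y) then
           1 - ((1 + ⌊(1 - ell nu ((1 - DD mu nu * (1 - p)) * y)) / lam⌋ : ℤ) : ℝ) * lam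
         else lam * Phi ^ (2 * sInf {m : ℕ | lam * Phi ^ (2 * m + 1) < ell nu ((1 - DD mu nu * (1 - p)) * y)} + 1))
         / ell nu ((1 - DD mu nu * (1 - p)) * y),
       sInf {m : ℕ | lam * Phi ^ (2 * m + 1) < ell nu ((1 - DD mu nu * (1 - p)) * y)}) := by
  have h1 : ¬ (p < 1 / CC mu nu) := not_lt.2 h.le
  have h2 : ¬ (p ≤ 1 / CC mu nu) := not_le.2 h
  simp only [dynStep]
  simp only [if_neg h1, if_pos h, if_neg h2]

lemma ell_nuval {nu : ℝ} (hnu : nu ≠ 0) (X : ℝ) : ell nu (nu * X / 2) = X := by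
  unfold ell; field_simp

lemma sInf_eq_of {S : Set ℕ} {N : ℕ} (h1 : N ∈ S) (h2 : ∀ m < N, m ∉ S) : sInf S = N :=
  le_antisymm (Nat.sInf_le h1)
    (le_csInf ⟨N, h1⟩ fun m hm => le_of_not_gt fun h => h2 m h hm)

lemma pow_phi_mono {i j : ℕ} (h : j ≤ i) : Phi ^ i ≤ Phi ^ j :=
  pow_le_pow_of_le_one phi_pos.le phi_lt.le h

lemma key_lt {lam a : ℝ} (hlam : 0 < lam) (ha : 1 < a * Phi) (i : ℕ) :
    lam * Phi ^ i < a * (lam * Phi ^ (i + 1)) := by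
  have h1 : 0 < lam * Phi ^ i := mul_pos hlam (pow_pos phi_pos i)
  calc lam * Phi ^ i = (lam * Phi ^ i) * 1 := by ring
    _ < (lam * Phi ^ i) * (a * Phi) := (mul_lt_mul_iff_right₀ h1).2 ha
    _ = a * (lam * Phi ^ (i+1)) := by ring

lemma key_lt2 {lam a : ℝ} (hlam : 0 < lam) (ha : Phi < a) (i : ℕ) :
    lam * Phi ^ (i + 1) < a * (lam * Phi ^ i) := by
  have h1 : 0 < lam * Phi ^ i := mul_pos hlam (pow_pos phi_pos i)
  calc lam * Phi ^ (i+1) = (lam * Phi ^ i) * Phi := by ring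
    _ < (lam * Phi ^ i) * a := (mul_lt_mul_iff_right₀ h1).2 ha
    _ = a * (lam * Phi ^ i) := by ring

lemma key_le1 {lam a : ℝ} (hlam : 0 < lam) (ha0 : 0 ≤ a) (ha : a * Phi ≤ 1)
    {i j : ℕ} (h : j + 1 ≤ i) : a * (lam * Phi ^ i) ≤ lam * Phi ^ j := by
  calc a * (lam * Phi ^ i) ≤ a * (lam * Phi ^ (j+1)) := by
        apply mul_le_mul_of_nonneg_left _ ha0
        exact mul_le_mul_of_nonneg_left (pow_phi_mono h) hlam.le
    _ = (a * Phi) * (lam * Phi ^ j) := by ring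
    _ ≤ 1 * (lam * Phi ^ j) :=
        mul_le_mul_of_nonneg_right ha (mul_pos hlam (pow_pos phi_pos j)).le
    _ = lam * Phi ^ j := one_mul _

lemma key_le3 {lam a : ℝ} (hlam : 0 < lam) (ha0 : 0 ≤ a) (ha : a * Phi ^ 3 ≤ 1)
    {i j : ℕ} (h : j + 3 ≤ i) : a * (lam * Phi ^ i) ≤ lam * Phi ^ j := by
  calc a * (lam * Phi ^ i) ≤ a * (lam * Phi ^ (j+3)) := by
        apply mul_le_mul_of_nonneg_left _ ha0
        exact mul_le_mul_of_nonneg_left (pow_phi_mono h) hlam.le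
    _ = (a * Phi ^ 3) * (lam * Phi ^ j) := by ring
    _ ≤ 1 * (lam * Phi ^ j) :=
        mul_le_mul_of_nonneg_right ha (mul_pos hlam (pow_pos phi_pos j)).le
    _ = lam * Phi ^ j := one_mul _

lemma stepB1 {lam nu mu C : ℝ} (hnu : 0 < nu) (hlam : 0 < lam)
    (hC : CC mu nu = C) (hC0 : 0 < C) (hCgt : Phi < C) (hCle : C * Phi ≤ 1) (n : ℕ) :
    dynStep lam nu mu (nu * (C * (lam * Phi ^ (2*n+1))) / 2, Phi / C, n+1)
      = (nu * (C * (lam * Phi ^ (2*n+3))) / 2, Phi / C, n+2) := by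
  have hp : Phi / C < 1 / CC mu nu := by
    rw [hC, div_lt_div_iff₀ hC0 hC0]; nlinarith [phi_lt]
  rw [dynStep_lt hp]
  have h1 : (1 : ℝ) - CC mu nu * (Phi / C) = Phi ^ 2 := by
    rw [hC]; field_simp; linarith [phi_sq]
  have hy : (1 - CC mu nu * (Phi / C)) * (nu * (C * (lam * Phi ^ (2*n+1))) / 2)
      = nu * (C * (lam * Phi ^ (2*n+3))) / 2 := by
    rw [h1]; ring
  rw [hy, ell_nuval hnu.ne']
  have hk : sInf {m : ℕ | lam * Phi ^ (2*m) < C * (lam * Phi ^ (2*n+3))} = n+2 := by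
    apply sInf_eq_of
    · show lam * Phi ^ (2*(n+2)) < C * (lam * Phi ^ (2*n+3))
      have e : 2*(n+2) = (2*n+3)+1 := by ring
      rw [e]; exact key_lt2 hlam hCgt (2*n+3)
    · intro m hm
      simp only [Set.mem_setOf_eq, not_lt]
      exact key_le1 hlam hC0.le hCle (by omega)
  rw [hk]
  simp only [Prod.mk.injEq]
  refine ⟨trivial, ?_, trivial⟩
  have hpow : (0:ℝ) < C * (lam * Phi ^ (2*n+3)) :=
    mul_pos hC0 (mul_pos hlam (pow_pos phi_pos _))
  rw [div_eq_div_iff hpow.ne' hC0.ne']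
  ring

lemma stepA2 {lam nu mu C D : ℝ} (hnu : 0 < nu) (hlam : 0 < lam)
    (hC : CC mu nu = C) (hC0 : 0 < C) (hD0 : 0 < D)
    (hCD : C + D = C * D) (hC1 : 1 < C * Phi) (hC3 : C * Phi ^ 3 < 1)
    (j : ℕ) :
    dynStep lam nu mu (nu * (D * (lam * Phi ^ (2*j+2))) / 2, 1 - 1/(D*Phi), j)
      = (nu * (C * (lam * Phi ^ (2*j+3))) / 2, 1/(C*Phi), j+1) := by
  have hDP : 0 < D * Phi := mul_pos hD0 phi_pos
  have hp : 1 - 1/(D*Phi) < 1 / CC mu nu := by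
    rw [hC]
    have h1C : 1/C = 1 - 1/D := by
      field_simp
      linarith [hCD]
    rw [h1C]
    have h2 : D*Phi < D := by nlinarith [phi_lt, phi_pos]
    have h3 := one_div_lt_one_div_of_lt hDP h2
    linarith
  rw [dynStep_lt hp]
  have h1 : (1 - CC mu nu * (1 - 1/(D*Phi))) * (D * Phi ^ 2) = C * Phi ^ 3 := by
    rw [hC]
    have e : (1 - C * (1 - 1/(D*Phi))) * (D * Phi^2)
        = D*Phi^2 - C*D*Phi^2 + C*Phi := by
      field_simp [phi_pos.ne']
      ring
    rw [e]
    linear_combination Phi^2 * hCD - C*Phi*phi_sq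
  have hy : (1 - CC mu nu * (1 - 1/(D*Phi))) * (nu * (D * (lam * Phi ^ (2*j+2))) / 2)
      = nu * (C * (lam * Phi ^ (2*j+3))) / 2 := by
    have e2 : (Phi:ℝ) ^ (2*j+2) = Phi^(2*j) * Phi^2 := by ring
    have e3 : (Phi:ℝ) ^ (2*j+3) = Phi^(2*j) * Phi^3 := by ring
    rw [e2, e3]
    calc (1 - CC mu nu * (1 - 1/(D*Phi))) * (nu * (D * (lam * (Phi^(2*j) * Phi^2))) / 2)
        = ((1 - CC mu nu * (1 - 1/(D*Phi))) * (D * Phi^2)) * (nu * lam * Phi^(2*j) / 2) := by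
          ring
      _ = (C * Phi^3) * (nu * lam * Phi^(2*j)/2) := by rw [h1]
      _ = nu * (C * (lam * (Phi^(2*j) * Phi^3))) / 2 := by ring
  rw [hy, ell_nuval hnu.ne']
  have hk : sInf {m : ℕ | lam * Phi^(2*m) < C * (lam * Phi^(2*j+3))} = j+1 := by
    apply sInf_eq_of
    · show lam * Phi ^ (2*(j+1)) < C * (lam * Phi ^ (2*j+3))
      have e : 2*(j+1) = 2*j+2 := by ring
      rw [e, show 2*j+3 = (2*j+2)+1 from rfl]
      exact key_lt hlam hC1 (2*j+2)
    · intro m hm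
      simp only [Set.mem_setOf_eq, not_lt]
      exact key_le3 hlam hC0.le hC3.le (by omega)
  rw [hk]
  simp only [Prod.mk.injEq]
  refine ⟨trivial, ?_, trivial⟩
  have hpow : (0:ℝ) < C * (lam * Phi ^ (2*j+3)) :=
    mul_pos hC0 (mul_pos hlam (pow_pos phi_pos _))
  rw [div_eq_div_iff hpow.ne' (mul_pos hC0 phi_pos).ne']
  ring

lemma stepA1 {lam nu mu C D : ℝ} {k : ℕ} (hnu : 0 < nu) (hlam : 0 < lam)
    (hk : 1 ≤ k) (hlamk : lam * (k + Phi) = 1)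
    (hC : CC mu nu = C) (hD : DD mu nu = D) (hC0 : 0 < C) (hD0 : 0 < D)
    (hCD : C + D = C * D) (hD1 : 1 < D * Phi) (hD3 : D * Phi ^ 3 < 1)
    (j : ℕ) :
    dynStep lam nu mu (nu * (C * (lam * Phi ^ (2*j+1))) / 2, 1/(C*Phi), j)
      = (nu * (D * (lam * Phi ^ (2*j+2))) / 2, 1 - 1/(D*Phi), j) := by
  have hCP : 0 < C * Phi := mul_pos hC0 phi_pos
  have hDP : 0 < D * Phi := mul_pos hD0 phi_pos
  have hlamPhi : lam ≤ Phi := by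
    have hk1 : (1:ℝ) ≤ (k:ℝ) := by exact_mod_cast hk
    nlinarith [phi_sq, phi_pos, hlam]
  have hp : 1 / CC mu nu < 1/(C*Phi) := by
    rw [hC]
    exact one_div_lt_one_div_of_lt hCP (by nlinarith [phi_lt, hC0])
  rw [dynStep_gt hp]
  have h1 : (1 - DD mu nu * (1 - 1/(C*Phi))) * (C * Phi) = D * Phi ^ 2 := by
    rw [hD]
    have e : (1 - D * (1 - 1/(C*Phi))) * (C * Phi) = C*Phi - D*C*Phi + D := by
      field_simp [phi_pos.ne']
      ring
    rw [e]
    linear_combination Phi * hCD - D * phi_sq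
  have hy : (1 - DD mu nu * (1 - 1/(C*Phi))) * (nu * (C * (lam * Phi ^ (2*j+1))) / 2)
      = nu * (D * (lam * Phi ^ (2*j+2))) / 2 := by
    have e1 : (Phi:ℝ) ^ (2*j+1) = Phi^(2*j) * Phi := by ring
    have e2 : (Phi:ℝ) ^ (2*j+2) = Phi^(2*j) * Phi^2 := by ring
    rw [e1, e2]
    calc (1 - DD mu nu * (1 - 1/(C*Phi))) * (nu * (C * (lam * (Phi^(2*j) * Phi))) / 2)
        = ((1 - DD mu nu * (1 - 1/(C*Phi))) * (C * Phi)) * (nu * lam * Phi^(2*j) / 2) := by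
          ring
      _ = (D * Phi^2) * (nu * lam * Phi^(2*j)/2) := by rw [h1]
      _ = nu * (D * (lam * (Phi^(2*j) * Phi^2))) / 2 := by ring
  rw [hy, ell_nuval hnu.ne']
  have hkap : sInf {m : ℕ | lam * Phi^(2*m+1) < D * (lam * Phi^(2*j+2))} = j := by
    apply sInf_eq_of
    · show lam * Phi ^ (2*j+1) < D * (lam * Phi ^ (2*j+2))
      rw [show 2*j+2 = (2*j+1)+1 from rfl]
      exact key_lt hlam hD1 (2*j+1)
    · intro m hm
      simp only [Set.mem_setOf_eq, not_lt]
      exact key_le3 hlam hD0.le hD3.le (by omega)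
  rw [hkap]
  have hU : (if 1 < D * (lam * Phi ^ (2*j+2)) then (1:ℝ)
      else if lam * Phi < D * (lam * Phi ^ (2*j+2)) then
        1 - ((1 + ⌊(1 - D * (lam * Phi ^ (2*j+2))) / lam⌋ : ℤ) : ℝ) * lam
      else lam * Phi ^ (2 * j + 1)) = lam * Phi ^ (2*j+1) := by
    rcases Nat.eq_zero_or_pos j with hj | hj
    · subst hj
      norm_num
      have hell : D * (lam * Phi ^ 2) ≤ D * Phi ^ 3 := by
        nlinarith [mul_nonneg (mul_nonneg hD0.le (pow_pos phi_pos 2).le)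
          (sub_nonneg.2 hlamPhi)]
      rw [if_neg (by push_neg; nlinarith [hD3]), if_pos
        (by nlinarith [mul_pos (sub_pos.2 hD1) (mul_pos hlam phi_pos)])]
      have hfl : ⌊(1 - D * (lam * Phi ^ 2)) / lam⌋ = (k:ℤ) - 1 := by
        have e : (1 - D * (lam * Phi ^ 2)) / lam = (k:ℝ) + Phi - D * Phi^2 := by
          field_simp
          linear_combination -hlamk
        rw [Int.floor_eq_iff, e]
        constructor
        · push_cast
          nlinarith [hD3, phi_sq, phi_pos]
        · push_cast
          nlinarith [hD1, phi_pos, phi_sq]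
      rw [hfl]
      push_cast
      linear_combination -hlamk
    · have h1' : D * (lam * Phi ^ (2*j+2)) ≤ lam * Phi ^ 1 :=
        key_le3 hlam hD0.le hD3.le (by omega)
      rw [pow_one] at h1'
      have hlp : lam * Phi < 1 := by nlinarith [hlamPhi, phi_lt, phi_pos]
      rw [if_neg (by push_neg; linarith), if_neg (by push_neg; exact h1')]
  rw [hU]
  simp only [Prod.mk.injEq]
  refine ⟨trivial, ?_, trivial⟩
  have hpow : (0:ℝ) < D * (lam * Phi ^ (2*j+2)) :=
    mul_pos hD0 (mul_pos hlam (pow_pos phi_pos _))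
  have : lam * Phi ^ (2*j+1) / (D * (lam * Phi ^ (2*j+2))) = 1 / (D*Phi) := by
    rw [div_eq_div_iff hpow.ne' hDP.ne']
    ring
  rw [this]

lemma stepB2a {lam nu mu C D : ℝ} (hnu : 0 < nu) (hlam : 0 < lam)
    (hlamlt : lam * Phi < 1)
    (hC : CC mu nu = C) (hD : DD mu nu = D) (hC0 : 0 < C) (hD0 : 0 < D)
    (hCD : C + D = C * D) (hDle : D * Phi ≤ 1) (hDgt : Phi < D) :
    dynStep lam nu mu (nu * (C * (lam * Phi ^ 1)) / 2, 1/(C*Phi), 0)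
      = (nu * (D * (lam * Phi ^ 2)) / 2, 1 - Phi/D, 1) := by
  have hCP : 0 < C * Phi := mul_pos hC0 phi_pos
  have hp : 1 / CC mu nu < 1/(C*Phi) := by
    rw [hC]
    exact one_div_lt_one_div_of_lt hCP (by nlinarith [phi_lt, hC0])
  rw [dynStep_gt hp]
  have h1 : (1 - DD mu nu * (1 - 1/(C*Phi))) * (C * Phi) = D * Phi ^ 2 := by
    rw [hD]
    have e : (1 - D * (1 - 1/(C*Phi))) * (C * Phi) = C*Phi - D*C*Phi + D := by
      field_simp [phi_pos.ne']
      ring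
    rw [e]
    linear_combination Phi * hCD - D * phi_sq
  have hy : (1 - DD mu nu * (1 - 1/(C*Phi))) * (nu * (C * (lam * Phi ^ 1)) / 2)
      = nu * (D * (lam * Phi ^ 2)) / 2 := by
    calc (1 - DD mu nu * (1 - 1/(C*Phi))) * (nu * (C * (lam * Phi ^ 1)) / 2)
        = ((1 - DD mu nu * (1 - 1/(C*Phi))) * (C * Phi)) * (nu * lam / 2) := by ring
      _ = (D * Phi^2) * (nu * lam / 2) := by rw [h1]
      _ = nu * (D * (lam * Phi ^ 2)) / 2 := by ring
  rw [hy, ell_nuval hnu.ne']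
  have hkap : sInf {m : ℕ | lam * Phi^(2*m+1) < D * (lam * Phi^2)} = 1 := by
    apply sInf_eq_of
    · show lam * Phi ^ (2*1+1) < D * (lam * Phi ^ 2)
      exact key_lt2 hlam hDgt 2
    · intro m hm
      simp only [Set.mem_setOf_eq, not_lt]
      exact key_le1 hlam hD0.le hDle (by omega)
  rw [hkap]
  have hell : D * (lam * Phi ^ 2) ≤ lam * Phi := by
    have := key_le1 hlam hD0.le hDle (i := 2) (j := 1) (by omega)
    rwa [pow_one] at this
  rw [if_neg (by push_neg; linarith), if_neg (by push_neg; exact hell)]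
  simp only [Prod.mk.injEq]
  refine ⟨trivial, ?_, trivial⟩
  have hpow : (0:ℝ) < D * (lam * Phi ^ 2) :=
    mul_pos hD0 (mul_pos hlam (pow_pos phi_pos _))
  have he : lam * Phi ^ (2*1+1) / (D * (lam * Phi ^ 2)) = Phi / D := by
    rw [div_eq_div_iff hpow.ne' hD0.ne']
    ring
  rw [he]

lemma stepB2b {lam nu mu C D : ℝ} (hnu : 0 < nu) (hlam : 0 < lam) (hlamlt : lam * Phi < 1)
    (hC : CC mu nu = C) (hD : DD mu nu = D) (hC0 : 0 < C) (hD0 : 0 < D)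
    (hCD : C + D = C * D) (hDle : D * Phi ≤ 1) (hDgt : Phi < D) (n : ℕ) (hn : 1 ≤ n) :
    dynStep lam nu mu (nu * (D * (lam * Phi ^ (2*n))) / 2, 1 - Phi/D, n)
      = (nu * (D * (lam * Phi ^ (2*n+2))) / 2, 1 - Phi/D, n+1) := by
  have hp : 1 / CC mu nu < 1 - Phi/D := by
    rw [hC]
    have h1C : 1/C = 1 - 1/D := by
      field_simp
      linarith [hCD]
    rw [h1C]
    have : Phi/D < 1/D := by
      rw [div_lt_div_iff₀ hD0 hD0]
      nlinarith [phi_lt, hD0]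
    linarith
  rw [dynStep_gt hp]
  have h1 : (1 - DD mu nu * (1 - (1 - Phi/D))) = Phi ^ 2 := by
    rw [hD]
    field_simp
    linarith [phi_sq]
  have hy : (1 - DD mu nu * (1 - (1 - Phi/D))) * (nu * (D * (lam * Phi ^ (2*n))) / 2)
      = nu * (D * (lam * Phi ^ (2*n+2))) / 2 := by
    rw [h1]; ring
  rw [hy, ell_nuval hnu.ne']
  have hkap : sInf {m : ℕ | lam * Phi^(2*m+1) < D * (lam * Phi^(2*n+2))} = n+1 := by
    apply sInf_eq_of
    · show lam * Phi ^ (2*(n+1)+1) < D * (lam * Phi ^ (2*n+2))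
      rw [show 2*(n+1)+1 = (2*n+2)+1 by ring]
      exact key_lt2 hlam hDgt (2*n+2)
    · intro m hm
      simp only [Set.mem_setOf_eq, not_lt]
      exact key_le1 hlam hD0.le hDle (by omega)
  rw [hkap]
  have hell : D * (lam * Phi ^ (2*n+2)) ≤ lam * Phi := by
    have h2 := key_le1 hlam hD0.le hDle (i := 2*n+2) (j := 1) (by omega)
    rwa [pow_one] at h2
  rw [if_neg (by push_neg; linarith), if_neg (by push_neg; exact hell)]
  simp only [Prod.mk.injEq]
  refine ⟨trivial, ?_, trivial⟩
  have hpow : (0:ℝ) < D * (lam * Phi ^ (2*n+2)) :=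
    mul_pos hD0 (mul_pos hlam (pow_pos phi_pos _))
  have he : lam * Phi ^ (2*(n+1)+1) / (D * (lam * Phi ^ (2*n+2))) = Phi / D := by
    rw [div_eq_div_iff hpow.ne' hD0.ne']
    ring
  rw [he]

lemma dynSeq_succ (lam eta nu mu : ℝ) (n : ℕ) :
    dynSeq lam eta nu mu (n+1) = dynStep lam nu mu (dynSeq lam eta nu mu n) := rfl

lemma base_y {lam eta nu mu C : ℝ} (hmn : mu + nu ≠ 0)
    (heta : eta = lam * Phi) (hC : CC mu nu = C) :
    eta * mu * nu / (mu + nu) = nu * (C * (lam * Phi ^ 1)) / 2 := by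
  subst heta
  rw [← hC]
  unfold CC
  field_simp

lemma dynSeq0_gt {lam eta nu mu C : ℝ} (hnu : 0 < nu) (hlam : 0 < lam)
    (hmn : mu + nu ≠ 0) (heta : eta = lam * Phi) (hC : CC mu nu = C)
    (hC0 : 0 < C) (hC1 : 1 < C * Phi) :
    dynSeq lam eta nu mu 0 = (nu * (C * (lam * Phi ^ 1)) / 2, 1/(C*Phi), 0) := by
  have hy0 := base_y hmn heta hC
  simp only [dynSeq]
  rw [hy0, ell_nuval hnu.ne']
  have hkap : sInf {m : ℕ | lam * Phi ^ (2*m) < C * (lam * Phi ^ 1)} = 0 := by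
    apply sInf_eq_of
    · show lam * Phi ^ (2*0) < C * (lam * Phi ^ 1)
      exact key_lt hlam hC1 0
    · intro m hm
      omega
  rw [hkap]
  simp only [Prod.mk.injEq]
  refine ⟨trivial, ?_, trivial⟩
  have hpow : (0:ℝ) < C * (lam * Phi ^ 1) :=
    mul_pos hC0 (mul_pos hlam (pow_pos phi_pos _))
  rw [div_eq_div_iff hpow.ne' (mul_pos hC0 phi_pos).ne']
  ring

lemma dynSeq0_lt {lam eta nu mu C : ℝ} (hnu : 0 < nu) (hlam : 0 < lam)
    (hmn : mu + nu ≠ 0) (heta : eta = lam * Phi) (hC : CC mu nu = C)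
    (hC0 : 0 < C) (hCgt : Phi < C) (hCle : C * Phi ≤ 1) :
    dynSeq lam eta nu mu 0 = (nu * (C * (lam * Phi ^ 1)) / 2, Phi/C, 1) := by
  have hy0 := base_y hmn heta hC
  simp only [dynSeq]
  rw [hy0, ell_nuval hnu.ne']
  have hkap : sInf {m : ℕ | lam * Phi ^ (2*m) < C * (lam * Phi ^ 1)} = 1 := by
    apply sInf_eq_of
    · show lam * Phi ^ (2*1) < C * (lam * Phi ^ 1)
      exact key_lt2 hlam hCgt 1
    · intro m hm
      simp only [Set.mem_setOf_eq, not_lt]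
      have hm0 : m = 0 := by omega
      subst hm0
      exact key_le1 hlam hC0.le hCle (by omega)
  rw [hkap]
  simp only [Prod.mk.injEq]
  refine ⟨trivial, ?_, trivial⟩
  have hpow : (0:ℝ) < C * (lam * Phi ^ 1) :=
    mul_pos hC0 (mul_pos hlam (pow_pos phi_pos _))
  rw [div_eq_div_iff hpow.ne' hC0.ne']
  ring

lemma caseA {lam eta nu mu C D : ℝ} {k : ℕ} (hnu : 0 < nu) (hlam : 0 < lam)
    (hk : 1 ≤ k) (hlamk : lam * ((k:ℝ) + Phi) = 1) (heta : eta = lam * Phi)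
    (hmn : mu + nu ≠ 0)
    (hC : CC mu nu = C) (hD : DD mu nu = D) (hC0 : 0 < C) (hD0 : 0 < D)
    (hCD : C + D = C * D) (hC1 : 1 < C * Phi) (hC3 : C * Phi ^ 3 < 1)
    (hD1 : 1 < D * Phi) (hD3 : D * Phi ^ 3 < 1) :
    ∀ j : ℕ, dynSeq lam eta nu mu (2*j)
        = (nu * (C * (lam * Phi ^ (2*j+1))) / 2, 1/(C*Phi), j)
      ∧ dynSeq lam eta nu mu (2*j+1)
        = (nu * (D * (lam * Phi ^ (2*j+2))) / 2, 1 - 1/(D*Phi), j) := by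
  intro j
  induction j with
  | zero =>
    constructor
    · exact dynSeq0_gt hnu hlam hmn heta hC hC0 hC1
    · rw [dynSeq_succ, dynSeq0_gt hnu hlam hmn heta hC hC0 hC1,
        stepA1 hnu hlam hk hlamk hC hD hC0 hD0 hCD hD1 hD3 0]
  | succ j ih =>
    have heven : dynSeq lam eta nu mu (2*(j+1))
        = (nu * (C * (lam * Phi ^ (2*(j+1)+1))) / 2, 1/(C*Phi), j+1) := by
      rw [show 2*(j+1)+1 = 2*j+3 by ring, show 2*(j+1) = (2*j+1)+1 by ring,
        dynSeq_succ, ih.2, stepA2 hnu hlam hC hC0 hD0 hCD hC1 hC3 j]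
    refine ⟨heven, ?_⟩
    rw [dynSeq_succ, heven,
      stepA1 hnu hlam hk hlamk hC hD hC0 hD0 hCD hD1 hD3 (j+1)]

lemma caseB1 {lam eta nu mu C : ℝ} (hnu : 0 < nu) (hlam : 0 < lam)
    (heta : eta = lam * Phi) (hmn : mu + nu ≠ 0)
    (hC : CC mu nu = C) (hC0 : 0 < C) (hCgt : Phi < C) (hCle : C * Phi ≤ 1) :
    ∀ n : ℕ, dynSeq lam eta nu mu n
        = (nu * (C * (lam * Phi ^ (2*n+1))) / 2, Phi/C, n+1) := by
  intro n
  induction n with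
  | zero => exact dynSeq0_lt hnu hlam hmn heta hC hC0 hCgt hCle
  | succ n ih =>
    rw [show 2*(n+1)+1 = 2*n+3 by ring, show n+1+1 = n+2 by omega,
      dynSeq_succ, ih, stepB1 hnu hlam hC hC0 hCgt hCle n]

lemma caseB2 {lam eta nu mu C D : ℝ} (hnu : 0 < nu) (hlam : 0 < lam)
    (hlamlt : lam * Phi < 1)
    (heta : eta = lam * Phi) (hmn : mu + nu ≠ 0)
    (hC : CC mu nu = C) (hD : DD mu nu = D) (hC0 : 0 < C) (hD0 : 0 < D)
    (hCD : C + D = C * D) (hC1 : 1 < C * Phi)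
    (hDle : D * Phi ≤ 1) (hDgt : Phi < D) :
    ∀ n : ℕ, 1 ≤ n → dynSeq lam eta nu mu n
        = (nu * (D * (lam * Phi ^ (2*n))) / 2, 1 - Phi/D, n) := by
  intro n hn
  induction n, hn using Nat.le_induction with
  | base =>
    show dynSeq lam eta nu mu (0+1) = (nu * (D * (lam * Phi ^ 2)) / 2, 1 - Phi / D, 1)
    rw [dynSeq_succ,
      dynSeq0_gt hnu hlam hmn heta hC hC0 hC1,
      stepB2a hnu hlam hlamlt hC hD hC0 hD0 hCD hDle hDgt]
  | succ n hn ih =>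
    rw [show 2*(n+1) = 2*n+2 by ring, dynSeq_succ, ih,
      stepB2b hnu hlam hlamlt hC hD hC0 hD0 hCD hDle hDgt n hn]

lemma CC_neg (mu nu : ℝ) : CC mu nu = DD (-mu) nu := by
  unfold CC DD
  rw [show 2*(-mu) = -(2*mu) by ring, show (-mu) - nu = -(mu+nu) by ring, neg_div_neg_eq]

lemma DD_neg (mu nu : ℝ) : DD mu nu = CC (-mu) nu := by
  unfold CC DD
  rw [show 2*(-mu) = -(2*mu) by ring, show (-mu) + nu = -(mu-nu) by ring, neg_div_neg_eq]

lemma sum_eq {mu nu : ℝ} (hmn : mu+nu ≠ 0) (hmd : mu-nu ≠ 0) :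
    CC mu nu + DD mu nu = CC mu nu * DD mu nu := by
  unfold CC DD
  field_simp
  ring

lemma factsA_pos {mu nu : ℝ} (hnu : 0 < nu) (h : nu/Phi^3 < mu) :
    0 < CC mu nu ∧ 0 < DD mu nu ∧ 1 < CC mu nu * Phi ∧ CC mu nu * Phi^3 < 1 ∧
      1 < DD mu nu * Phi ∧ DD mu nu * Phi^3 < 1 := by
  have hphi3 : 0 < Phi^3 := pow_pos phi_pos 3
  have h' : nu < mu*Phi^3 := (div_lt_iff₀ hphi3).1 h
  have h3 : mu*Phi^3 = 2*mu*Phi - mu := by linear_combination mu * phi_cube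
  have hmu0 : 0 < mu := by nlinarith
  have hm : nu < mu := by nlinarith [mul_lt_mul_of_pos_left phi_lt hmu0, phi_pos]
  have hmn : 0 < mu+nu := by linarith
  have hmd : 0 < mu-nu := by linarith
  refine ⟨div_pos (by linarith) hmn, div_pos (by linarith) hmd, ?_, ?_, ?_, ?_⟩
  · rw [show CC mu nu * Phi = 2*mu*Phi/(mu+nu) from by unfold CC; ring, one_lt_div hmn]
    linarith
  · rw [show CC mu nu * Phi^3 = 2*mu*Phi^3/(mu+nu) from by unfold CC; ring, div_lt_one hmn]
    nlinarith [h3, mul_pos hmu0 (show (0:ℝ) < 3-4*Phi by linarith [phi_lt'])]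
  · rw [show DD mu nu * Phi = 2*mu*Phi/(mu-nu) from by unfold DD; ring, one_lt_div hmd]
    linarith
  · rw [show DD mu nu * Phi^3 = 2*mu*Phi^3/(mu-nu) from by unfold DD; ring, div_lt_one hmd]
    nlinarith [h', h3, mul_pos hmu0 (show (0:ℝ) < 4-6*Phi by linarith [phi_lt'])]

lemma factsB_pos {mu nu : ℝ} (hnu : 0 < nu) (h1 : nu < mu) (h2 : mu ≤ nu/Phi^3) :
    0 < CC mu nu ∧ Phi < CC mu nu ∧ CC mu nu * Phi ≤ 1 ∧
      0 < DD mu nu ∧ 1 < DD mu nu * Phi := by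
  have hphi3 : 0 < Phi^3 := pow_pos phi_pos 3
  have h' : mu*Phi^3 ≤ nu := (le_div_iff₀ hphi3).1 h2
  have h3 : mu*Phi^3 = 2*mu*Phi - mu := by linear_combination mu * phi_cube
  have hmu0 : 0 < mu := by linarith
  have hmn : 0 < mu+nu := by linarith
  have hmd : 0 < mu-nu := by linarith
  have hone : 1 < CC mu nu := by
    rw [show CC mu nu = 2*mu/(mu+nu) from rfl, one_lt_div hmn]
    linarith
  refine ⟨by linarith [phi_pos, phi_lt], by linarith [phi_lt], ?_, div_pos (by linarith) hmd, ?_⟩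
  · rw [show CC mu nu * Phi = 2*mu*Phi/(mu+nu) from by unfold CC; ring, div_le_one hmn]
    linarith
  · rw [show DD mu nu * Phi = 2*mu*Phi/(mu-nu) from by unfold DD; ring, one_lt_div hmd]
    nlinarith [mul_pos hmu0 hphi3]

lemma assembleA {lam eta nu mu : ℝ} (hnu : 0 < nu)
    (H : ∀ j : ℕ, dynSeq lam eta nu mu (2*j)
        = (nu * (CC mu nu * (lam * Phi ^ (2*j+1))) / 2, 1/(CC mu nu * Phi), j)
      ∧ dynSeq lam eta nu mu (2*j+1)
        = (nu * (DD mu nu * (lam * Phi ^ (2*j+2))) / 2, 1 - 1/(DD mu nu * Phi), j)) :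
    (∀ n : ℕ, pseq lam eta nu mu (n + 2) = pseq lam eta nu mu n) ∧
    (∀ n : ℕ, Even n →
      pseq lam eta nu mu n = 1 / (CC mu nu * Phi) ∧
      ell nu (yseq lam eta nu mu n) = CC mu nu * lam * Phi ^ (n + 1)) ∧
    (∀ n : ℕ, Odd n →
      pseq lam eta nu mu n = 1 - 1 / (DD mu nu * Phi) ∧
      ell nu (yseq lam eta nu mu n) = DD mu nu * lam * Phi ^ (n + 1)) := by
  refine ⟨?_, ?_, ?_⟩
  · intro n
    unfold pseq
    rcases Nat.even_or_odd n with ⟨t, ht⟩ | ⟨t, ht⟩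
    · have hn : n = 2*t := by omega
      subst hn
      rw [show 2*t+2 = 2*(t+1) by ring, (H (t+1)).1, (H t).1]
    · subst ht
      rw [show 2*t+1+2 = 2*(t+1)+1 by ring, (H (t+1)).2, (H t).2]
  · rintro n ⟨t, ht⟩
    have hn : n = 2*t := by omega
    subst hn
    constructor
    · unfold pseq
      rw [(H t).1]
    · unfold yseq
      rw [(H t).1]
      show ell nu (nu * (CC mu nu * (lam * Phi ^ (2*t+1))) / 2) = _
      rw [ell_nuval hnu.ne']
      ring
  · rintro n ⟨t, ht⟩
    subst ht
    constructor
    · unfold pseq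
      rw [(H t).2]
    · unfold yseq
      rw [(H t).2]
      show ell nu (nu * (DD mu nu * (lam * Phi ^ (2*t+2))) / 2) = _
      rw [ell_nuval hnu.ne']
      ring


/-- **Theorem 4.3 (periodicity and explicit form of the dynamical sequences for
λ = 1/(k+Φ)).** With μ̄ = ν/Φ³: if |μ| > μ̄ then p is 2-periodic with the stated
explicit values; if |μ| ≤ μ̄ then p is eventually constant, with the stated
explicit values on (−μ̄, −ν) and (ν, μ̄). -/
theorem dynamical_sequences_periodic
    (k : ℕ) (hk : 1 ≤ k) (lam eta nu mu : ℝ)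
    (hlam : lam = 1 / (k + Phi)) (heta : eta = 1 - k * lam)
    (hnu : 0 < nu) (hmu : nu < |mu|) :
    ((nu / Phi ^ 3 < |mu|) →
      (∀ n : ℕ, pseq lam eta nu mu (n + 2) = pseq lam eta nu mu n) ∧
      (∀ n : ℕ, Even n →
        pseq lam eta nu mu n = 1 / (CC mu nu * Phi) ∧
        ell nu (yseq lam eta nu mu n) = CC mu nu * lam * Phi ^ (n + 1)) ∧
      (∀ n : ℕ, Odd n →
        pseq lam eta nu mu n = 1 - 1 / (DD mu nu * Phi) ∧
        ell nu (yseq lam eta nu mu n) = DD mu nu * lam * Phi ^ (n + 1))) ∧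
    ((|mu| ≤ nu / Phi ^ 3) →
      ∀ n : ℕ, 1 ≤ n → pseq lam eta nu mu (n + 1) = pseq lam eta nu mu n) ∧
    ((-(nu / Phi ^ 3) < mu ∧ mu < -nu) →
      ∀ n : ℕ, 1 ≤ n →
        pseq lam eta nu mu n = 1 - Phi / DD mu nu ∧
        ell nu (yseq lam eta nu mu n) = DD mu nu * lam * Phi ^ (2 * n)) ∧
    ((nu < mu ∧ mu < nu / Phi ^ 3) →
      ∀ n : ℕ,
        pseq lam eta nu mu n = Phi / CC mu nu ∧
        ell nu (yseq lam eta nu mu n) = CC mu nu * lam * Phi ^ (2 * n + 1)) := by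
  have hkR : (1:ℝ) ≤ (k:ℝ) := by exact_mod_cast hk
  have hkP : (0:ℝ) < (k:ℝ) + Phi := by linarith [phi_pos]
  have hlam0 : 0 < lam := by rw [hlam]; exact div_pos one_pos hkP
  have hlamk : lam * ((k:ℝ) + Phi) = 1 := by rw [hlam]; field_simp
  have heta' : eta = lam * Phi := by rw [heta]; linear_combination -hlamk
  have hlamPhi : lam ≤ Phi := by nlinarith [phi_sq, phi_pos, hlam0]
  have hlamlt : lam * Phi < 1 := by nlinarith [phi_lt, phi_pos, hlamPhi, phi_sq, hlam0]
  have hphi3 : 0 < Phi^3 := pow_pos phi_pos 3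
  have hp31 : Phi^3 < 1 := by nlinarith [phi_cube, phi_lt]
  have hb0 : 0 < nu / Phi^3 := div_pos hnu hphi3
  have hbnu : nu < nu / Phi^3 := by rw [lt_div_iff₀ hphi3]; nlinarith [hnu, hp31]
  refine ⟨?_, ?_, ?_, ?_⟩
  · -- Part 1
    intro h
    rcases lt_abs.mp h with hpos | hneg
    · obtain ⟨hC0, hD0, hC1, hC3, hD1, hD3⟩ := factsA_pos hnu hpos
      have hmu0 : 0 < mu := lt_trans hb0 hpos
      have hmgt : nu < mu := lt_trans hbnu hpos
      have hmn : mu + nu ≠ 0 := (by linarith : (0:ℝ) < mu + nu).ne'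
      have hmd : mu - nu ≠ 0 := (by linarith : (0:ℝ) < mu - nu).ne'
      exact assembleA hnu
        (caseA hnu hlam0 hk hlamk heta' hmn rfl rfl hC0 hD0 (sum_eq hmn hmd) hC1 hC3 hD1 hD3)
    · obtain ⟨hD0, hC0, hD1, hD3, hC1, hC3⟩ := factsA_pos hnu hneg
      rw [← CC_neg mu nu] at hC0 hC1 hC3
      rw [← DD_neg mu nu] at hD0 hD1 hD3
      have hmlt : mu < -nu := by linarith [lt_trans hbnu hneg]
      have hmn : mu + nu ≠ 0 := (by linarith : mu + nu < 0).ne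
      have hmd : mu - nu ≠ 0 := (by linarith : mu - nu < 0).ne
      exact assembleA hnu
        (caseA hnu hlam0 hk hlamk heta' hmn rfl rfl hC0 hD0 (sum_eq hmn hmd) hC1 hC3 hD1 hD3)
  · -- Part 2
    intro h n hn
    rcases le_or_gt mu 0 with hm0 | hm0
    · have hmneg : mu < 0 := by
        rcases lt_or_eq_of_le hm0 with h' | h'
        · exact h'
        · exfalso; rw [h'] at hmu; simp at hmu; linarith
      have habs : |mu| = -mu := abs_of_neg hmneg
      rw [habs] at hmu h
      obtain ⟨hc0, hcgt, hcle, hd0, hd1⟩ := factsB_pos hnu hmu h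
      have hC0' : 0 < CC mu nu := by rw [CC_neg]; exact hd0
      have hC1' : 1 < CC mu nu * Phi := by rw [CC_neg]; exact hd1
      have hD0' : 0 < DD mu nu := by rw [DD_neg]; exact hc0
      have hDgt' : Phi < DD mu nu := by rw [DD_neg]; exact hcgt
      have hDle' : DD mu nu * Phi ≤ 1 := by rw [DD_neg]; exact hcle
      have hmn : mu + nu ≠ 0 := (by linarith : mu + nu < 0).ne
      have hmd : mu - nu ≠ 0 := (by linarith : mu - nu < 0).ne
      have H := caseB2 hnu hlam0 hlamlt heta' hmn rfl rfl hC0' hD0'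
        (sum_eq hmn hmd) hC1' hDle' hDgt'
      unfold pseq
      rw [H (n+1) (by omega), H n hn]
    · have habs : |mu| = mu := abs_of_pos hm0
      rw [habs] at hmu h
      obtain ⟨hc0, hcgt, hcle, hd0, hd1⟩ := factsB_pos hnu hmu h
      have hmn : mu + nu ≠ 0 := (by linarith : (0:ℝ) < mu + nu).ne'
      have H := caseB1 hnu hlam0 heta' hmn rfl hc0 hcgt hcle
      unfold pseq
      rw [H (n+1), H n]
  · -- Part 3
    rintro ⟨h1, h2⟩ n hn
    have hmu2 : nu < -mu := by linarith
    have h2' : -mu ≤ nu / Phi^3 := by linarith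
    obtain ⟨hc0, hcgt, hcle, hd0, hd1⟩ := factsB_pos hnu hmu2 h2'
    have hC0' : 0 < CC mu nu := by rw [CC_neg]; exact hd0
    have hC1' : 1 < CC mu nu * Phi := by rw [CC_neg]; exact hd1
    have hD0' : 0 < DD mu nu := by rw [DD_neg]; exact hc0
    have hDgt' : Phi < DD mu nu := by rw [DD_neg]; exact hcgt
    have hDle' : DD mu nu * Phi ≤ 1 := by rw [DD_neg]; exact hcle
    have hmn : mu + nu ≠ 0 := (by linarith : mu + nu < 0).ne
    have hmd : mu - nu ≠ 0 := (by linarith : mu - nu < 0).ne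
    have H := caseB2 hnu hlam0 hlamlt heta' hmn rfl rfl hC0' hD0'
      (sum_eq hmn hmd) hC1' hDle' hDgt'
    constructor
    · unfold pseq
      rw [H n hn]
    · unfold yseq
      rw [H n hn]
      show ell nu (nu * (DD mu nu * (lam * Phi ^ (2*n))) / 2) = _
      rw [ell_nuval hnu.ne']
      ring
  · -- Part 4
    rintro ⟨h1, h2⟩ n
    obtain ⟨hc0, hcgt, hcle, hd0, hd1⟩ := factsB_pos hnu h1 h2.le
    have hmn : mu + nu ≠ 0 := (by linarith : (0:ℝ) < mu + nu).ne'
    have H := caseB1 hnu hlam0 heta' hmn rfl hc0 hcgt hcle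
    constructor
    · unfold pseq
      rw [H n]
    · unfold yseq
      rw [H n]
      show ell nu (nu * (CC mu nu * (lam * Phi ^ (2*n+1))) / 2) = _
      rw [ell_nuval hnu.ne']
      ring

end
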